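/- arXiv:0706.0496 — 4 statements merged into one kernel-verified Lean document; each statement's English description precedes it below -/
import Mathlib

section
/- For any real c > 1/(d-1) with d ≥ 2 an integer, the equation ρ = exp(c(ρ^{d-1} - 1)) has a unique solution ρ in the open interval (0,1). -/
open Real Set Filter Topology

theorem stmt_0 (d : ℕ) (hd : 2 ≤ d) (c : ℝ) (hc : 1 / ((d : ℝ) - 1) < c) :
    ∃! ρ : ℝ, ρ ∈ Set.Ioo (0 : ℝ) 1 ∧ ρ = Real.exp (c * (ρ ^ (d - 1) - 1)) := by
  set n := d - 1 with hn_def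
  have hn1 : 1 ≤ n := by omega
  have hnR : (n : ℝ) = (d : ℝ) - 1 := by
    have : (n : ℝ) = ((d : ℝ) - 1) := by
      rw [hn_def]; push_cast [Nat.cast_sub (by omega : 1 ≤ d)]; ring
    exact this
  have hd2 : (2:ℝ) ≤ (d:ℝ) := by exact_mod_cast hd
  have hnpos : (0 : ℝ) < (n : ℝ) := by rw [hnR]; linarith
  have hc0 : 0 < c := lt_trans (by rw [← hnR]; positivity) hc
  have hcn : 1 < c * n := by
    rw [div_lt_iff₀ (by rw [← hnR] at *; linarith)] at hc
    rw [hnR]; linarith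
  -- the convex auxiliary function
  set φ : ℝ → ℝ := fun x => c * (x ^ n - 1) - Real.log x with hφ
  have hφconv : StrictConvexOn ℝ (Ioi (0:ℝ)) φ := by
    have h1 : ConvexOn ℝ (Ioi (0:ℝ)) (fun x : ℝ => c * (x ^ n - 1)) := by
      have := (convexOn_pow n).subset (Ioi_subset_Ici le_rfl) (convex_Ioi (0:ℝ))
      have := (this.smul hc0.le).add_const (-c)
      convert this using 2 with x
      any_goals rfl
      simp [smul_eq_mul]; ring
    have h2 : StrictConvexOn ℝ (Ioi (0:ℝ)) (fun x : ℝ => -Real.log x) :=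
      strictConcaveOn_log_Ioi.neg
    exact h1.add_strictConvexOn h2
  -- fixed points give φ = 0
  have hfix_phi : ∀ x : ℝ, 0 < x → x = Real.exp (c * (x ^ n - 1)) → φ x = 0 := by
    intro x hx hxe
    have h := congrArg Real.log hxe
    rw [Real.log_exp] at h
    simp only [hφ]
    linarith
  have hφ1 : φ 1 = 0 := by simp [hφ]
  -- existence: find ρ0 ∈ (0,1) with F ρ0 < 0
  set F : ℝ → ℝ := fun x => Real.exp (c * (x ^ n - 1)) - x with hF
  have hFderiv : HasDerivAt F (c * n - 1) 1 := by
    have h1 : HasDerivAt (fun x : ℝ => x ^ n) ((n : ℝ) * 1 ^ (n - 1)) 1 := hasDerivAt_pow n 1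
    have h2 : HasDerivAt (fun x : ℝ => c * (x ^ n - 1)) (c * ((n : ℝ) * 1 ^ (n - 1))) 1 :=
      ((h1.sub_const 1).const_mul c)
    have h3 : HasDerivAt (fun x : ℝ => Real.exp (c * (x ^ n - 1)))
        (Real.exp (c * (1 ^ n - 1)) * (c * ((n : ℝ) * 1 ^ (n - 1)))) 1 := h2.exp
    have h4 := h3.sub (hasDerivAt_id 1)
    convert h4 using 1
    any_goals rfl
    simp
  have hF1 : F 1 = 0 := by simp [hF]
  obtain ⟨ρ0, hρ0mem, hρ0neg⟩ : ∃ ρ0, ρ0 ∈ Ioo (0:ℝ) 1 ∧ F ρ0 < 0 := by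
    have hslope := hFderiv.hasDerivWithinAt (s := Iio (1:ℝ))
    have htendsto : Tendsto (slope F 1) (𝓝[<] 1) (𝓝 (c * n - 1)) := by
      have := (hasDerivWithinAt_iff_tendsto_slope).1 hslope
      exact this.mono_left (nhdsWithin_mono _ (by intro x hx; exact ⟨hx, ne_of_lt hx⟩))
    have hev : ∀ᶠ x in 𝓝[<] (1:ℝ), 0 < slope F 1 x :=
      htendsto.eventually (eventually_gt_nhds (by linarith))
    have hev2 : ∀ᶠ x in 𝓝[<] (1:ℝ), x ∈ Ioo (0:ℝ) 1 :=
      Ioo_mem_nhdsLT_of_mem (by constructor <;> norm_num)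
    obtain ⟨x, hx1, hx2⟩ := (hev.and hev2).exists
    refine ⟨x, hx2, ?_⟩
    have hxne : x - 1 < 0 := by linarith [hx2.2]
    have hsl : slope F 1 x = (F x - F 1) / (x - 1) := slope_def_field F 1 x
    rw [hsl, hF1, sub_zero] at hx1
    rcases div_pos_iff.1 hx1 with ⟨_, h2⟩ | ⟨h1, _⟩
    · linarith
    · exact h1
  -- F 0 > 0
  have hF0 : 0 < F 0 := by
    have : (0:ℝ) ^ n = 0 := zero_pow (by omega)
    simp [hF, this]
    positivity
  -- IVT
  have hFcont : ContinuousOn F (Icc 0 ρ0) := by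
    apply Continuous.continuousOn
    fun_prop
  obtain ⟨ρ, hρmem, hρval⟩ : ∃ ρ ∈ Ioo (0:ℝ) ρ0, F ρ = 0 := by
    have := intermediate_value_Ioo' (le_of_lt hρ0mem.1) hFcont
    have h0mem : (0:ℝ) ∈ Ioo (F ρ0) (F 0) := ⟨hρ0neg, hF0⟩
    obtain ⟨ρ, hρ, hρe⟩ := this h0mem
    exact ⟨ρ, hρ, hρe⟩
  have hρIoo : ρ ∈ Ioo (0:ℝ) 1 := ⟨hρmem.1, lt_trans hρmem.2 hρ0mem.2⟩
  have hρeq : ρ = Real.exp (c * (ρ ^ n - 1)) := by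
    have := hρval
    simp only [hF] at this
    linarith
  refine ⟨ρ, ⟨hρIoo, hρeq⟩, ?_⟩
  -- uniqueness
  rintro y ⟨hyIoo, hyeq⟩
  by_contra hne
  -- both y and ρ are roots of φ in (0,1), plus 1
  have hφy : φ y = 0 := hfix_phi y hyIoo.1 hyeq
  have hφρ : φ ρ = 0 := hfix_phi ρ hρIoo.1 hρeq
  -- wlog a < b < 1
  have key : ∀ a b : ℝ, a ∈ Ioo (0:ℝ) 1 → b ∈ Ioo (0:ℝ) 1 → a < b → φ a = 0 → φ b = 0 → False := by
    intro a b ha hb hab hφa hφb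
    have h1a : (0:ℝ) < 1 - a := by linarith [ha.2]
    have hane : a ≠ (1:ℝ) := by linarith [ha.2]
    have hts : (1 - b) / (1 - a) + (b - a) / (1 - a) = 1 := by
      rw [← add_div, div_eq_one_iff_eq (by linarith : (1:ℝ) - a ≠ 0)]; ring
    have h2 := hφconv.2 (mem_Ioi.2 ha.1) (mem_Ioi.2 one_pos) hane
      (div_pos (by linarith [hb.2]) h1a) (div_pos (by linarith) h1a) hts
    have hcomb : ((1 - b) / (1 - a)) • a + ((b - a) / (1 - a)) • (1:ℝ) = b := by
      simp only [smul_eq_mul]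
      field_simp
      ring
    rw [hcomb, hφa, hφ1, hφb] at h2
    simp only [smul_eq_mul, mul_zero, add_zero] at h2
    exact absurd h2 (lt_irrefl 0)
  rcases lt_or_gt_of_ne hne with h | h
  · exact key y ρ hyIoo hρIoo h hφy hφρ
  · exact key ρ y hρIoo hyIoo h hφρ hφy
end

section
/- Let Y be a real random variable with Var(Y) ≤ γn/2 for some γ > 0 and suppose Y is integer-valued. Suppose further there is β with γ = β²/64 and 0 < β < 0.01 such that for all integers s, t with |s − E[Y]| ≤ √n, |t − E[Y]| ≤ √n and |s − t| ≤ β√n we have P(Y = t) ≥ (2/3)·P(Y = s) − n^{−10}. Then for n sufficiently large a contradiction arises; i.e., Var(Y) ≥ γn/2. -/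
open MeasureTheory

set_option maxHeartbeats 1000000

/-- If an integer-valued random variable enjoys the stated locality property,
then its variance cannot be smaller than `γ n / 2`. -/
theorem stmt_5 (β γ : ℝ) (hβ0 : 0 < β) (hβ1 : β < 0.01) (hγ : γ = β ^ 2 / 64) :
    ∃ N : ℕ, ∀ n : ℕ, N ≤ n →
      ∀ (Ω : Type) (_ : MeasurableSpace Ω) (P : Measure Ω)
        (_ : IsProbabilityMeasure P) (Y : Ω → ℤ),
        Measurable Y →
        Integrable (fun ω => ((Y ω : ℝ)) ^ 2) P →
        (∀ s t : ℤ,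
          |(s : ℝ) - ∫ ω, (Y ω : ℝ) ∂P| ≤ Real.sqrt n →
          |(t : ℝ) - ∫ ω, (Y ω : ℝ) ∂P| ≤ Real.sqrt n →
          |(s : ℝ) - (t : ℝ)| ≤ β * Real.sqrt n →
          (P {ω | Y ω = t}).toReal ≥
            (2 / 3) * (P {ω | Y ω = s}).toReal - ((n : ℝ) ^ 10)⁻¹) →
        ProbabilityTheory.variance (fun ω => (Y ω : ℝ)) P ≥ γ * n / 2 := by
  refine ⟨⌈(100 / β) ^ 2⌉₊ + 1, fun n hn Ω mΩ P hPprob Y hY hY2 hloc => ?_⟩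
  by_contra hVar
  push_neg at hVar
  set μ : ℝ := ∫ ω, (Y ω : ℝ) ∂P with hμdef
  have hn1 : (1 : ℝ) ≤ n := by
    have : 1 ≤ n := le_trans (Nat.le_add_left 1 _) hn
    exact_mod_cast this
  have hrn0 : 0 < Real.sqrt n := Real.sqrt_pos.2 (by linarith)
  set x : ℝ := β * Real.sqrt n with hxdef
  have hx0 : 0 < x := mul_pos hβ0 hrn0
  -- x ≥ 100
  have hx100 : (100 : ℝ) ≤ x := by
    have h1 : ((100 / β) ^ 2 : ℝ) ≤ n := by
      calc ((100 / β) ^ 2 : ℝ) ≤ (⌈(100 / β) ^ 2⌉₊ : ℝ) := Nat.le_ceil _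
        _ ≤ n := by exact_mod_cast le_trans (Nat.le_succ _) hn
    have h2 : (100 / β : ℝ) ≤ Real.sqrt n := by
      rw [show (100 / β : ℝ) = Real.sqrt ((100 / β) ^ 2) by
        rw [Real.sqrt_sq (by positivity)]]
      exact Real.sqrt_le_sqrt h1
    calc (100 : ℝ) = β * (100 / β) := by field_simp
      _ ≤ β * Real.sqrt n := by nlinarith
  -- γ n = (x/8)^2
  have hγn : γ * n = (x / 8) ^ 2 := by
    have hs : Real.sqrt n ^ 2 = n := Real.sq_sqrt (by linarith)
    rw [hγ, hxdef]; ring_nf; nlinarith [hs]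
  have hx8 : 0 < x / 8 := by linarith
  -- the random variable is in L², Chebyshev
  have hYm : Measurable fun ω => (Y ω : ℝ) := measurable_from_top.comp hY
  have hmem : MemLp (fun ω => (Y ω : ℝ)) 2 P :=
    (memLp_two_iff_integrable_sq hYm.aestronglyMeasurable).2 hY2
  have cheb := ProbabilityTheory.meas_ge_le_variance_div_sq (μ := P) hmem hx8
  have hVarnn : 0 ≤ ProbabilityTheory.variance (fun ω => (Y ω : ℝ)) P :=
    ProbabilityTheory.variance_nonneg _ _
  have hhalf : ProbabilityTheory.variance (fun ω => (Y ω : ℝ)) P / (x / 8) ^ 2 ≤ 1 / 2 := by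
    rw [div_le_div_iff₀ (by positivity) (by norm_num)]
    nlinarith [hγn]
  -- the "bad" set
  set B : Set Ω := {ω | x / 8 ≤ |(Y ω : ℝ) - μ|} with hBdef
  have hBmeas : MeasurableSet B := by
    apply measurableSet_le measurable_const
    exact (hYm.sub measurable_const).abs
  have hBle : P B ≤ ENNReal.ofReal (1 / 2) := by
    refine le_trans ?_ (ENNReal.ofReal_le_ofReal hhalf)
    exact cheb
  have hgood : ENNReal.ofReal (1 / 2) ≤ P Bᶜ := by
    have h1 : P Bᶜ = 1 - P B := prob_compl_eq_one_sub hBmeas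
    rw [h1]
    have : (1 : ENNReal) - ENNReal.ofReal (1 / 2) ≤ 1 - P B :=
      tsub_le_tsub_left hBle 1
    refine le_trans ?_ this
    rw [show (1 : ENNReal) = ENNReal.ofReal 1 by simp]
    rw [← ENNReal.ofReal_sub _ (by norm_num)]
    norm_num
  -- the interval S of integers near μ
  set a : ℤ := ⌈μ - x / 8⌉ with hadef
  set b : ℤ := ⌊μ + x / 8⌋ with hbdef
  set S : Finset ℤ := Finset.Icc a b with hSdef
  have hab : a ≤ b := by
    rw [hadef, hbdef, Int.le_floor]
    have := Int.ceil_lt_add_one (μ - x / 8)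
    push_cast
    linarith
  have hSne : S.Nonempty := Finset.nonempty_Icc.2 hab
  have haR : μ - x / 8 ≤ (a : ℝ) := Int.le_ceil _
  have hbR : (b : ℝ) ≤ μ + x / 8 := Int.floor_le _
  have hScard : (S.card : ℝ) ≤ x / 4 + 1 := by
    rw [hSdef, Int.card_Icc]
    have h1 : ((b + 1 - a).toNat : ℤ) = b + 1 - a := Int.toNat_of_nonneg (by omega)
    have : ((b + 1 - a).toNat : ℝ) = (b : ℝ) + 1 - a := by exact_mod_cast h1
    rw [this]; linarith
  have hScard1 : (1 : ℝ) ≤ S.card := by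
    have := Finset.card_pos.2 hSne
    exact_mod_cast this
  -- the good set is covered by events Y = k, k ∈ S
  have hcover : Bᶜ ⊆ ⋃ k ∈ S, {ω | Y ω = k} := by
    intro ω hω
    simp only [hBdef, Set.mem_compl_iff, Set.mem_setOf_eq, not_le] at hω
    have h1 : μ - x / 8 ≤ (Y ω : ℝ) := by
      cases abs_lt.1 hω with
      | intro h1 h2 => linarith
    have h2 : (Y ω : ℝ) ≤ μ + x / 8 := by
      cases abs_lt.1 hω with
      | intro h1 h2 => linarith
    refine Set.mem_biUnion (Finset.mem_Icc.2 ⟨?_, ?_⟩) rfl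
    · rw [hadef]; exact Int.ceil_le.2 h1
    · rw [hbdef]; exact Int.le_floor.2 h2
  have hEmeas : ∀ k : ℤ, MeasurableSet {ω | Y ω = k} := fun k =>
    hY (measurableSet_singleton k)
  -- pigeonhole: some s₀ ∈ S with large point mass
  have hsum : (1 / 2 : ℝ) ≤ ∑ k ∈ S, (P {ω | Y ω = k}).toReal := by
    have h1 : P Bᶜ ≤ ∑ k ∈ S, P {ω | Y ω = k} :=
      le_trans (measure_mono hcover) (measure_biUnion_finset_le S _)
    have h2 : ENNReal.ofReal (1 / 2) ≤ ∑ k ∈ S, P {ω | Y ω = k} := le_trans hgood h1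
    have h3 : (∑ k ∈ S, P {ω | Y ω = k}).toReal = ∑ k ∈ S, (P {ω | Y ω = k}).toReal :=
      ENNReal.toReal_sum (fun k _ => measure_ne_top P _)
    have h4 := ENNReal.toReal_mono (by
      exact (ENNReal.sum_lt_top.2 fun k _ => measure_lt_top P _).ne) h2
    rw [h3] at h4
    simpa using h4
  obtain ⟨s₀, hs₀S, hs₀⟩ : ∃ s₀ ∈ S,
      1 / (2 * (S.card : ℝ)) ≤ (P {ω | Y ω = s₀}).toReal := by
    apply Finset.exists_le_of_sum_le hSne
    rw [Finset.sum_const, nsmul_eq_mul]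
    rw [show (S.card : ℝ) * (1 / (2 * S.card)) = 1 / 2 by field_simp]
    exact hsum
  -- the interval T around s₀
  set m : ℤ := ⌊x⌋ with hmdef
  have hm1 : (1 : ℤ) ≤ m := by
    rw [hmdef, Int.le_floor]; push_cast; linarith
  have hmR : (m : ℝ) ≤ x := Int.floor_le _
  have hmR' : x - 1 ≤ (m : ℝ) := by
    have := Int.lt_floor_add_one x; linarith
  set T : Finset ℤ := Finset.Icc (s₀ - m) (s₀ + m) with hTdef
  have hTcard : (T.card : ℝ) = 2 * (m : ℝ) + 1 := by
    rw [hTdef, Int.card_Icc]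
    have h1 : (s₀ + m + 1 - (s₀ - m)) = 2 * m + 1 := by ring
    rw [h1]
    have h2 : (((2 * m + 1).toNat : ℤ) : ℝ) = ((2 * m + 1 : ℤ) : ℝ) := by
      rw [Int.toNat_of_nonneg (by omega)]
    push_cast at h2 ⊢
    linarith
  -- s₀ is close to μ
  have hs₀μ : |(s₀ : ℝ) - μ| ≤ x / 8 := by
    rw [hSdef] at hs₀S
    obtain ⟨h1, h2⟩ := Finset.mem_Icc.1 hs₀S
    have h1' : (a : ℝ) ≤ s₀ := by exact_mod_cast h1
    have h2' : (s₀ : ℝ) ≤ b := by exact_mod_cast h2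
    rw [abs_le]; constructor <;> linarith
  -- each t ∈ T has mass at least c'
  have hβmul : β * Real.sqrt n ≤ 0.01 * Real.sqrt n :=
    mul_le_mul_of_nonneg_right (le_of_lt hβ1) hrn0.le
  have hβ8 : x / 8 ≤ Real.sqrt n := by
    rw [hxdef]; linarith [hrn0.le]
  have hkey : ∀ t ∈ T, 2 / 3 * (1 / (2 * (S.card : ℝ))) - ((n : ℝ) ^ 10)⁻¹ ≤
      (P {ω | Y ω = t}).toReal := by
    intro t ht
    obtain ⟨h1, h2⟩ := Finset.mem_Icc.1 ht
    have h1' : ((s₀ : ℝ) - m) ≤ t := by exact_mod_cast h1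
    have h2' : (t : ℝ) ≤ (s₀ : ℝ) + m := by exact_mod_cast h2
    have hst : |(s₀ : ℝ) - (t : ℝ)| ≤ β * Real.sqrt n := by
      rw [abs_le]; constructor <;> [linarith; linarith]
    have hsμ : |(s₀ : ℝ) - μ| ≤ Real.sqrt n := le_trans hs₀μ hβ8
    have htμ : |(t : ℝ) - μ| ≤ Real.sqrt n := by
      have h3 : |(t : ℝ) - μ| ≤ |(t : ℝ) - s₀| + |(s₀ : ℝ) - μ| := by
        have := abs_sub_le ((t : ℝ)) ((s₀ : ℝ)) μ
        exact this
      have h4 : |(t : ℝ) - (s₀ : ℝ)| ≤ x := by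
        rw [abs_le]; constructor <;> linarith
      have h5 : x + x / 8 ≤ Real.sqrt n := by
        rw [hxdef]; linarith [hrn0.le]
      calc |(t : ℝ) - μ| ≤ |(t : ℝ) - s₀| + |(s₀ : ℝ) - μ| := h3
        _ ≤ x + x / 8 := by linarith [hs₀μ]
        _ ≤ Real.sqrt n := h5
    have := hloc s₀ t hsμ htμ hst
    have h6 : 2 / 3 * (1 / (2 * (S.card : ℝ))) ≤ 2 / 3 * (P {ω | Y ω = s₀}).toReal := by
      nlinarith
    linarith
  -- the masses over T sum to at most 1
  have hTsum : ∑ t ∈ T, (P {ω | Y ω = t}).toReal ≤ 1 := by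
    have hdisj : (T : Set ℤ).PairwiseDisjoint fun t => {ω | Y ω = t} := by
      intro i _ j _ hij
      simp only [Function.onFun, Set.disjoint_left]
      intro ω hωi hωj
      exact hij (by rw [← hωi, ← hωj])
    have h1 : ∑ t ∈ T, P {ω | Y ω = t} = P (⋃ t ∈ T, {ω | Y ω = t}) :=
      (measure_biUnion_finset hdisj fun t _ => hEmeas t).symm
    have h2 : ∑ t ∈ T, P {ω | Y ω = t} ≤ 1 := by
      rw [h1]; exact prob_le_one
    have h3 : (∑ t ∈ T, P {ω | Y ω = t}).toReal = ∑ t ∈ T, (P {ω | Y ω = t}).toReal :=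
      ENNReal.toReal_sum (fun k _ => measure_ne_top P _)
    have h4 := ENNReal.toReal_mono (by norm_num) h2
    rw [h3] at h4
    simpa using h4
  -- combine
  have hlower : (T.card : ℝ) * (2 / 3 * (1 / (2 * (S.card : ℝ))) - ((n : ℝ) ^ 10)⁻¹) ≤
      ∑ t ∈ T, (P {ω | Y ω = t}).toReal := by
    have := Finset.card_nsmul_le_sum T _ _ hkey
    rwa [nsmul_eq_mul] at this
  -- final numeric contradiction
  have hn10 : ((n : ℝ) ^ 10)⁻¹ ≤ 0.1 / x := by
    have hsn : Real.sqrt n ≤ n := by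
      nlinarith [Real.sq_sqrt (show (0:ℝ) ≤ n by linarith), Real.sqrt_nonneg (n : ℝ)]
    have hpow : (n : ℝ) ≤ (n : ℝ) ^ 10 := le_self_pow₀ hn1 (by norm_num)
    have hxn : x ≤ 0.1 * (n : ℝ) ^ 10 := by
      rw [hxdef]
      nlinarith [hβmul]
    rw [le_div_iff₀ hx0]
    have hnpos : (0 : ℝ) < (n : ℝ) ^ 10 := by positivity
    have h1 : ((n : ℝ) ^ 10)⁻¹ * x ≤ ((n : ℝ) ^ 10)⁻¹ * (0.1 * (n : ℝ) ^ 10) :=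
      mul_le_mul_of_nonneg_left hxn (by positivity)
    have h2 : ((n : ℝ) ^ 10)⁻¹ * (0.1 * (n : ℝ) ^ 10) = 0.1 := by
      field_simp
    linarith
  have hc' : (1.18 : ℝ) / x ≤ 2 / 3 * (1 / (2 * (S.card : ℝ))) - ((n : ℝ) ^ 10)⁻¹ := by
    have hS26 : (S.card : ℝ) ≤ 0.26 * x := by linarith
    have h1 : 2 / 3 * (1 / (2 * (S.card : ℝ))) = 1 / (3 * (S.card : ℝ)) := by
      field_simp
    rw [h1]
    have h2 : 1 / (3 * (0.26 * x)) ≤ 1 / (3 * (S.card : ℝ)) := by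
      apply one_div_le_one_div_of_le
      · positivity
      · nlinarith
    have h3 : (1.18 : ℝ) / x + 0.1 / x ≤ 1 / (3 * (0.26 * x)) := by
      rw [← add_div, div_le_div_iff₀ hx0 (by positivity)]
      nlinarith
    linarith [hn10]
  have hT2 : (1.98 : ℝ) * x ≤ T.card := by
    rw [hTcard]; linarith
  have hfinal : (2.3364 : ℝ) ≤ 1 := by
    have h1 : (1.98 * x) * (1.18 / x) ≤ (T.card : ℝ) *
        (2 / 3 * (1 / (2 * (S.card : ℝ))) - ((n : ℝ) ^ 10)⁻¹) := by
      apply mul_le_mul hT2 hc' (by positivity) (by positivity)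
    have h2 : (1.98 * x) * (1.18 / x) = 2.3364 := by
      field_simp; ring
    linarith [le_trans h1 (le_trans hlower hTsum)]
  norm_num at hfinal
end

section
/- Let Ω = Ω₁ × ⋯ × Ω_K be a product of probability spaces and X : Ω → ℝ an integrable random variable such that |X(ω) − X(ω′)| ≤ 1 whenever ω and ω′ differ in exactly one coordinate. Then for every t > 0, P(|X − E[X]| ≥ t) ≤ 2·exp(−t²/(2K)). -/
open MeasureTheory

open Real in

private lemma bdd_integrable {α : Type*} [MeasurableSpace α] (ν : Measure α) [IsFiniteMeasure ν]
    {f : α → ℝ} (hm : Measurable f) (C : ℝ) (h : ∀ a, |f a| ≤ C) : Integrable f ν :=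
  (integrable_const C).mono' hm.aestronglyMeasurable (Filter.Eventually.of_forall h)

private lemma hoeffding_lite {α : Type*} [MeasurableSpace α] (ν : Measure α) [IsProbabilityMeasure ν]
    (f : α → ℝ) (hm : Measurable f) (hosc : ∀ a b, |f a - f b| ≤ 1) (s : ℝ) :
    ∫ a, Real.exp (s * (f a - ∫ b, f b ∂ν)) ∂ν ≤ Real.exp (s ^ 2 / 2) := by
  rcases isEmpty_or_nonempty α with hα | hα
  · rw [integral_of_isEmpty]
    positivity
  obtain ⟨a₀⟩ := hα
  have hfint : Integrable f ν := by
    refine bdd_integrable ν hm (|f a₀| + 1) fun a => ?_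
    have := hosc a a₀
    have := abs_sub_abs_le_abs_sub (f a) (f a₀)
    linarith
  set m := ∫ b, f b ∂ν with hm_def
  have hbd : ∀ a, |f a - m| ≤ 1 := by
    intro a
    have h1 : f a - m = ∫ b, (f a - f b) ∂ν := by
      rw [integral_sub (integrable_const _) hfint, integral_const, probReal_univ]
      simp [hm_def]
    rw [h1]
    calc |∫ b, (f a - f b) ∂ν| ≤ ∫ b, |f a - f b| ∂ν := by
          simpa [Real.norm_eq_abs] using
            norm_integral_le_integral_norm (μ := ν) (f := fun b => f a - f b)
      _ ≤ ∫ _b, (1 : ℝ) ∂ν := by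
          refine integral_mono ((integrable_const _).sub hfint).abs (integrable_const _)
            fun b => hosc a b
      _ = 1 := by simp
  have key : ∀ a, Real.exp (s * (f a - m)) ≤ Real.cosh s + (f a - m) * Real.sinh s := by
    intro a
    set x := f a - m with hx
    have hx1 : -1 ≤ x := neg_le_of_abs_le (hbd a)
    have hx2 : x ≤ 1 := le_of_abs_le (hbd a)
    have hc := convexOn_exp.2 (Set.mem_univ (-s)) (Set.mem_univ s)
      (show (0:ℝ) ≤ (1 - x) / 2 by linarith) (show (0:ℝ) ≤ (1 + x) / 2 by linarith)
      (show (1 - x) / 2 + (1 + x) / 2 = 1 by ring)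
    simp only [smul_eq_mul] at hc
    have harg : (1 - x) / 2 * (-s) + (1 + x) / 2 * s = s * x := by ring
    rw [harg] at hc
    calc Real.exp (s * x) ≤ (1 - x) / 2 * Real.exp (-s) + (1 + x) / 2 * Real.exp s := hc
      _ = Real.cosh s + x * Real.sinh s := by rw [Real.cosh_eq, Real.sinh_eq]; ring
  calc ∫ a, Real.exp (s * (f a - m)) ∂ν
      ≤ ∫ a, (Real.cosh s + (f a - m) * Real.sinh s) ∂ν := by
        refine integral_mono ?_ ?_ key
        · refine bdd_integrable ν (by fun_prop) (Real.exp |s|) fun a => ?_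
          rw [abs_of_nonneg (Real.exp_nonneg _), Real.exp_le_exp]
          calc s * (f a - m) ≤ |s * (f a - m)| := le_abs_self _
            _ = |s| * |f a - m| := abs_mul _ _
            _ ≤ |s| * 1 := by gcongr; exact hbd a
            _ = |s| := mul_one _
        · exact (integrable_const _).add (((hfint.sub (integrable_const m))).mul_const _)
    _ = Real.cosh s := by
        have h1 : Integrable (fun a => (f a - m) * Real.sinh s) ν :=
          (hfint.sub (integrable_const m)).mul_const _
        rw [integral_add (integrable_const _) h1, integral_const, probReal_univ]
        have h2 : ∫ a, (f a - m) * Real.sinh s ∂ν = (∫ a, (f a - m) ∂ν) * Real.sinh s :=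
          integral_mul_const _ _
        rw [h2, integral_sub hfint (integrable_const m), integral_const, probReal_univ]
        simp [hm_def]
    _ ≤ Real.exp (s ^ 2 / 2) := Real.cosh_le_exp_half_sq s

private lemma osc_le : ∀ (K : ℕ) (Ω : Fin K → Type) (X : (∀ i, Ω i) → ℝ),
    (∀ (ω ω' : ∀ i, Ω i) (j : Fin K), (∀ i, i ≠ j → ω i = ω' i) → |X ω - X ω'| ≤ 1) →
    ∀ ω ω', |X ω - X ω'| ≤ K := by
  intro K
  induction K with
  | zero =>
    intro Ω X _ ω ω'
    have : ω = ω' := funext fun i => i.elim0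
    simp [this]
  | succ K ih =>
    intro Ω X hlip ω ω'
    set mid : ∀ i, Ω i := Fin.cons (ω 0) (fun i => ω' i.succ) with hmid
    have h1 : |X mid - X ω'| ≤ 1 := by
      refine hlip mid ω' 0 fun i hi => ?_
      obtain ⟨i, rfl⟩ := Fin.exists_succ_eq.2 hi
      simp [hmid]
    have h2 : |X ω - X mid| ≤ K := by
      set X' : (∀ i : Fin K, Ω i.succ) → ℝ := fun ρ => X (Fin.cons (ω 0) ρ) with hX'
      have hlip' : ∀ (ρ ρ' : ∀ i : Fin K, Ω i.succ) (j : Fin K),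
          (∀ i, i ≠ j → ρ i = ρ' i) → |X' ρ - X' ρ'| ≤ 1 := by
        intro ρ ρ' j hj
        refine hlip _ _ j.succ fun i hi => ?_
        rcases Fin.eq_zero_or_eq_succ i with rfl | ⟨i, rfl⟩
        · simp
        · simp only [Fin.cons_succ]
          exact hj i (fun h => hi (by rw [h]))
      have := ih (fun i => Ω i.succ) X' hlip' (fun i => ω i.succ) (fun i => ω' i.succ)
      have e1 : X' (fun i => ω i.succ) = X ω := congrArg X (Fin.cons_self_tail ω)
      have e2 : X' (fun i => ω' i.succ) = X mid := rfl
      rwa [e1, e2] at this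
    calc |X ω - X ω'| ≤ |X ω - X mid| + |X mid - X ω'| := abs_sub_le _ _ _
      _ ≤ K + 1 := add_le_add h2 h1
      _ = (K + 1 : ℕ) := by push_cast; ring

private lemma abs_le_shift {x c C : ℝ} (h : |x - c| ≤ C) : |x| ≤ |c| + C := by
  have h2 : |x| - |c| ≤ |x - c| := abs_sub_abs_le_abs_sub x c
  linarith

private lemma exp_abs_le {y B : ℝ} (h : |y| ≤ B) : |Real.exp y| ≤ Real.exp B := by
  rw [abs_of_nonneg (Real.exp_nonneg _)]
  exact Real.exp_le_exp.2 (le_trans (le_abs_self _) h)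

set_option maxHeartbeats 2000000 in
private lemma mgf_pi_le : ∀ (K : ℕ) (Ω : Fin K → Type) (mΩ : ∀ i, MeasurableSpace (Ω i))
    (μ : ∀ i, Measure (Ω i)) (hμ : ∀ i, IsProbabilityMeasure (μ i))
    (X : (∀ i, Ω i) → ℝ) (hXm : Measurable X)
    (hint : Integrable X (Measure.pi μ))
    (hlip : ∀ (ω ω' : ∀ i, Ω i) (j : Fin K), (∀ i, i ≠ j → ω i = ω' i) → |X ω - X ω'| ≤ 1)
    (s : ℝ),
    ∫ ω, Real.exp (s * (X ω - ∫ ω', X ω' ∂(Measure.pi μ))) ∂(Measure.pi μ)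
      ≤ Real.exp (K * s ^ 2 / 2) := by
  intro K
  induction K with
  | zero =>
    intro Ω mΩ μ hμ X hXm hint hlip s
    haveI := hμ
    haveI : IsProbabilityMeasure (Measure.pi μ) := inferInstance
    have hc : ∀ ω : (∀ i, Ω i), X ω = X (fun i => i.elim0) :=
      fun ω => congrArg X (funext fun i => i.elim0)
    have h1 : (fun ω => X ω) = fun _ : (∀ i, Ω i) => X (fun i => i.elim0) := funext hc
    rw [show (∫ ω', X ω' ∂(Measure.pi μ)) = X (fun i => i.elim0) by
      rw [h1, integral_const, probReal_univ]; simp]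
    simp [hc]
  | succ K ih =>
    intro Ω mΩ μ hμ X hXm hint hlip s
    haveI := hμ
    haveI : IsProbabilityMeasure (Measure.pi μ) := inferInstance
    set Ω' : Fin K → Type := fun j => Ω ((0 : Fin (K + 1)).succAbove j) with hΩ'
    set ν : ∀ j, Measure (Ω' j) := fun j => μ ((0 : Fin (K + 1)).succAbove j) with hν
    haveI : ∀ j, IsProbabilityMeasure (ν j) := fun j => hμ _
    haveI : IsProbabilityMeasure (Measure.pi ν) := inferInstance
    set e := MeasurableEquiv.piFinSuccAbove Ω 0 with he
    have mp : MeasurePreserving e (Measure.pi μ) ((μ 0).prod (Measure.pi ν)) :=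
      measurePreserving_piFinSuccAbove μ 0
    set c := ∫ ω', X ω' ∂(Measure.pi μ) with hc
    set F : Ω 0 × (∀ j, Ω' j) → ℝ := fun p => X (e.symm p) with hF
    have hFm : Measurable F := hXm.comp e.symm.measurable
    have hFval : ∀ a ρ, F (a, ρ) = X (Fin.insertNth 0 a ρ) := fun a ρ => rfl
    -- boundedness of X - c
    have hXc : ∀ ω, |X ω - c| ≤ (K + 1 : ℝ) := by
      intro ω
      have h1 : X ω - c = ∫ ω', (X ω - X ω') ∂(Measure.pi μ) := by
        rw [integral_sub (integrable_const _) hint, integral_const, probReal_univ]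
        simp [hc]
      rw [h1]
      calc |∫ ω', (X ω - X ω') ∂(Measure.pi μ)| ≤ ∫ ω', |X ω - X ω'| ∂(Measure.pi μ) := by
            simpa [Real.norm_eq_abs] using
              norm_integral_le_integral_norm (μ := Measure.pi μ) (fun ω' => X ω - X ω')
        _ ≤ ∫ _ω', ((K + 1 : ℕ) : ℝ) ∂(Measure.pi μ) := by
            refine integral_mono ((integrable_const _).sub hint).abs (integrable_const _)
              fun ω' => osc_le (K + 1) Ω X hlip ω ω'
        _ = (K + 1 : ℝ) := by rw [integral_const, probReal_univ]; simp
    have hFc : ∀ p, |F p - c| ≤ (K + 1 : ℝ) := fun p => hXc _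
    -- the conditional mean g
    set g : (∀ j, Ω' j) → ℝ := fun ρ => ∫ a, F (a, ρ) ∂(μ 0) with hg
    have hgm : Measurable (fun ρ => g ρ) :=
      (hFm.stronglyMeasurable.integral_prod_left').measurable
    have hgc : ∀ ρ, |g ρ - c| ≤ (K + 1 : ℝ) := by
      intro ρ
      have hIF : Integrable (fun a => F (a, ρ)) (μ 0) :=
        bdd_integrable _ (hFm.comp (measurable_id.prodMk measurable_const))
          (|c| + (K + 1)) fun a => abs_le_shift (hFc (a, ρ))
      have h1 : g ρ - c = ∫ a, (F (a, ρ) - c) ∂(μ 0) := by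
        rw [integral_sub hIF (integrable_const _), integral_const, probReal_univ]
        simp [hg]
      rw [h1]
      calc |∫ a, (F (a, ρ) - c) ∂(μ 0)| ≤ ∫ a, |F (a, ρ) - c| ∂(μ 0) := by
            simpa [Real.norm_eq_abs] using
              norm_integral_le_integral_norm (μ := μ 0) (fun a => F (a, ρ) - c)
        _ ≤ ∫ _a, (K + 1 : ℝ) ∂(μ 0) :=
            integral_mono (hIF.sub (integrable_const _)).abs (integrable_const _)
              fun a => hFc (a, ρ)
        _ = (K + 1 : ℝ) := by rw [integral_const, probReal_univ]; simp
    have hgint : Integrable g (Measure.pi ν) :=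
      bdd_integrable _ hgm (|c| + (K + 1)) fun ρ => abs_le_shift (hgc ρ)
    -- insertNth coordinate facts
    have hins : ∀ (a : Ω 0) (ρ ρ' : ∀ j, Ω' j) (j : Fin K), (∀ i, i ≠ j → ρ i = ρ' i) →
        ∀ i, i ≠ (0 : Fin (K + 1)).succAbove j →
          Fin.insertNth 0 a ρ i = Fin.insertNth 0 a ρ' i := by
      intro a ρ ρ' j hj i hi
      rcases eq_or_ne i 0 with rfl | hi0
      · simp
      · obtain ⟨k, rfl⟩ := Fin.exists_succAbove_eq hi0
        rw [Fin.insertNth_apply_succAbove, Fin.insertNth_apply_succAbove]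
        exact hj k fun h => hi (by rw [h])
    have hglip : ∀ (ρ ρ' : ∀ j, Ω' j) (j : Fin K),
        (∀ i, i ≠ j → ρ i = ρ' i) → |g ρ - g ρ'| ≤ 1 := by
      intro ρ ρ' j hj
      have hIF : ∀ σ, Integrable (fun a => F (a, σ)) (μ 0) := fun σ =>
        bdd_integrable _ (hFm.comp (measurable_id.prodMk measurable_const))
          (|c| + (K + 1)) fun a => abs_le_shift (hFc (a, σ))
      have h1 : g ρ - g ρ' = ∫ a, (F (a, ρ) - F (a, ρ')) ∂(μ 0) := by
        rw [integral_sub (hIF ρ) (hIF ρ')]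
      rw [h1]
      have hpt : ∀ a, |F (a, ρ) - F (a, ρ')| ≤ 1 := by
        intro a
        rw [hFval, hFval]
        exact hlip _ _ ((0 : Fin (K + 1)).succAbove j) (hins a ρ ρ' j hj)
      calc |∫ a, (F (a, ρ) - F (a, ρ')) ∂(μ 0)| ≤ ∫ a, |F (a, ρ) - F (a, ρ')| ∂(μ 0) := by
            simpa [Real.norm_eq_abs] using
              norm_integral_le_integral_norm (μ := μ 0) (fun a => F (a, ρ) - F (a, ρ'))
        _ ≤ ∫ _a, (1 : ℝ) ∂(μ 0) :=
            integral_mono ((hIF ρ).sub (hIF ρ')).abs (integrable_const _) hpt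
        _ = 1 := by simp
    -- Fubini: c = ∫ g
    have hFint : Integrable F ((μ 0).prod (Measure.pi ν)) :=
      bdd_integrable _ hFm (|c| + (K + 1)) fun p => abs_le_shift (hFc p)
    have hcg : c = ∫ ρ, g ρ ∂(Measure.pi ν) := by
      have h1 : ∫ ω, F (e ω) ∂(Measure.pi μ) = ∫ p, F p ∂((μ 0).prod (Measure.pi ν)) :=
        mp.integral_comp e.measurableEmbedding F
      have h2 : ∀ ω, F (e ω) = X ω := fun ω => by
        show X (e.symm (e ω)) = X ω
        rw [MeasurableEquiv.symm_apply_apply]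
      rw [hc, show (fun ω => X ω) = fun ω => F (e ω) from funext fun ω => (h2 ω).symm]
      rw [h1, integral_prod_symm F hFint]
    -- the exponential integrand and its bound
    set G : Ω 0 × (∀ j, Ω' j) → ℝ := fun p => Real.exp (s * (F p - c)) with hG
    have hGm : Measurable G := by fun_prop
    have hGbd : ∀ p, |G p| ≤ Real.exp (|s| * (K + 1)) := by
      intro p
      refine exp_abs_le ?_
      calc |s * (F p - c)| = |s| * |F p - c| := abs_mul _ _
        _ ≤ |s| * (K + 1) := by gcongr; exact hFc p
    have hGint : Integrable G ((μ 0).prod (Measure.pi ν)) :=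
      bdd_integrable _ hGm _ hGbd
    -- step 1 & 2: transfer + Fubini
    have step12 : ∫ ω, Real.exp (s * (X ω - c)) ∂(Measure.pi μ)
        = ∫ ρ, ∫ a, G (a, ρ) ∂(μ 0) ∂(Measure.pi ν) := by
      have h2 : ∀ ω, G (e ω) = Real.exp (s * (X ω - c)) := fun ω => by
        show Real.exp (s * (X (e.symm (e ω)) - c)) = _
        rw [MeasurableEquiv.symm_apply_apply]
      rw [show (fun ω => Real.exp (s * (X ω - c))) = fun ω => G (e ω)
            from funext fun ω => (h2 ω).symm,
        mp.integral_comp e.measurableEmbedding G, integral_prod_symm G hGint]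
    -- pointwise bound on inner integral
    have inner_le : ∀ ρ, ∫ a, G (a, ρ) ∂(μ 0)
        ≤ Real.exp (s ^ 2 / 2) * Real.exp (s * (g ρ - c)) := by
      intro ρ
      have hfm : Measurable (fun a => F (a, ρ)) :=
        hFm.comp (measurable_id.prodMk measurable_const)
      have hosc : ∀ a b, |F (a, ρ) - F (b, ρ)| ≤ 1 := by
        intro a b
        rw [hFval, hFval]
        refine hlip _ _ 0 fun i hi => ?_
        obtain ⟨k, rfl⟩ := Fin.exists_succAbove_eq hi
        rw [Fin.insertNth_apply_succAbove, Fin.insertNth_apply_succAbove]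
      have hH := hoeffding_lite (μ 0) (fun a => F (a, ρ)) hfm hosc s
      have hsplit : ∀ a, G (a, ρ)
          = Real.exp (s * (F (a, ρ) - g ρ)) * Real.exp (s * (g ρ - c)) := by
        intro a
        have key : ∀ x m : ℝ, s * (x - c) = s * (x - m) + s * (m - c) := fun x m => by ring
        show Real.exp (s * (F (a, ρ) - c)) = _
        rw [key (F (a, ρ)) (g ρ), Real.exp_add]
      calc ∫ a, G (a, ρ) ∂(μ 0)
          = (∫ a, Real.exp (s * (F (a, ρ) - g ρ)) ∂(μ 0)) * Real.exp (s * (g ρ - c)) := by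
            simp_rw [hsplit]; exact integral_mul_const _ _
        _ ≤ Real.exp (s ^ 2 / 2) * Real.exp (s * (g ρ - c)) := by
            exact mul_le_mul_of_nonneg_right hH (Real.exp_nonneg _)
    -- integrability of both sides over ρ
    have hLm : Measurable (fun ρ => ∫ a, G (a, ρ) ∂(μ 0)) :=
      (hGm.stronglyMeasurable.integral_prod_left').measurable
    have hLbd : ∀ ρ, |∫ a, G (a, ρ) ∂(μ 0)| ≤ Real.exp (|s| * (K + 1)) := by
      intro ρ
      calc |∫ a, G (a, ρ) ∂(μ 0)| ≤ ∫ a, |G (a, ρ)| ∂(μ 0) := by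
            simpa [Real.norm_eq_abs] using
              norm_integral_le_integral_norm (μ := μ 0) (fun a => G (a, ρ))
        _ ≤ ∫ _a, Real.exp (|s| * (K + 1)) ∂(μ 0) := by
            refine integral_mono ?_ (integrable_const _) fun a => hGbd (a, ρ)
            exact (bdd_integrable _ (hGm.comp (measurable_id.prodMk measurable_const))
              _ fun a => hGbd (a, ρ)).abs
        _ = _ := by rw [integral_const, probReal_univ]; simp
    have hLint : Integrable (fun ρ => ∫ a, G (a, ρ) ∂(μ 0)) (Measure.pi ν) :=
      bdd_integrable _ hLm _ hLbd
    have hRm : Measurable (fun ρ => Real.exp (s ^ 2 / 2) * Real.exp (s * (g ρ - c))) := by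
      fun_prop
    have hRbd : ∀ ρ, |Real.exp (s ^ 2 / 2) * Real.exp (s * (g ρ - c))|
        ≤ Real.exp (s ^ 2 / 2) * Real.exp (|s| * (K + 1)) := by
      intro ρ
      rw [abs_mul, abs_of_nonneg (Real.exp_nonneg _)]
      gcongr
      refine exp_abs_le ?_
      calc |s * (g ρ - c)| = |s| * |g ρ - c| := abs_mul _ _
        _ ≤ |s| * (K + 1) := by gcongr; exact hgc ρ
    have hRint : Integrable (fun ρ => Real.exp (s ^ 2 / 2) * Real.exp (s * (g ρ - c)))
        (Measure.pi ν) := bdd_integrable _ hRm _ hRbd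
    -- IH for g
    have hIH := ih Ω' (fun j => inferInstance) ν (fun j => hμ _) g hgm hgint hglip s
    rw [← hcg] at hIH
    -- put it together
    calc ∫ ω, Real.exp (s * (X ω - c)) ∂(Measure.pi μ)
        = ∫ ρ, ∫ a, G (a, ρ) ∂(μ 0) ∂(Measure.pi ν) := step12
      _ ≤ ∫ ρ, Real.exp (s ^ 2 / 2) * Real.exp (s * (g ρ - c)) ∂(Measure.pi ν) :=
          integral_mono hLint hRint inner_le
      _ = Real.exp (s ^ 2 / 2) * ∫ ρ, Real.exp (s * (g ρ - c)) ∂(Measure.pi ν) :=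
          integral_const_mul _ _
      _ ≤ Real.exp (s ^ 2 / 2) * Real.exp (K * s ^ 2 / 2) := by
          exact mul_le_mul_of_nonneg_left hIH (Real.exp_nonneg _)
      _ = Real.exp ((K + 1 : ℕ) * s ^ 2 / 2) := by
          rw [← Real.exp_add]
          congr 1
          push_cast
          ring


set_option maxHeartbeats 800000 in
/-- Azuma / bounded differences (McDiarmid) inequality with Lipschitz
constant 1 in each of `K` coordinates. -/
theorem stmt_8 (K : ℕ) (Ω : Fin K → Type) (mΩ : ∀ i, MeasurableSpace (Ω i))
    (μ : ∀ i, Measure (Ω i)) (hμ : ∀ i, IsProbabilityMeasure (μ i))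
    (X : (∀ i, Ω i) → ℝ) (hXm : Measurable X)
    (hint : Integrable X (Measure.pi μ))
    (hlip : ∀ (ω ω' : ∀ i, Ω i) (j : Fin K),
      (∀ i, i ≠ j → ω i = ω' i) → |X ω - X ω'| ≤ 1)
    (t : ℝ) (ht : 0 < t) :
    ((Measure.pi μ) {ω | |X ω - ∫ ω', X ω' ∂(Measure.pi μ)| ≥ t}).toReal
      ≤ 2 * Real.exp (-t ^ 2 / (2 * K)) := by
  haveI := hμ
  haveI : IsProbabilityMeasure (Measure.pi μ) := inferInstance
  set c := ∫ ω', X ω' ∂(Measure.pi μ) with hc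
  rcases Nat.eq_zero_or_pos K with rfl | hK
  · -- K = 0 : X is constant
    have hcc : c = X (fun i => i.elim0) := by
      rw [hc, show (fun ω => X ω) = fun _ : (∀ i, Ω i) => X (fun i => i.elim0)
          from funext fun ω => congrArg X (funext fun i => i.elim0),
        integral_const, probReal_univ]
      simp
    have hempty : {ω | |X ω - c| ≥ t} = ∅ := by
      ext ω
      simp only [Set.mem_setOf_eq, Set.mem_empty_iff_false, iff_false, not_le, ge_iff_le]
      have : X ω = c := by rw [hcc]; exact congrArg X (funext fun i => i.elim0)
      rw [this]
      simpa using ht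
    rw [hempty]
    simp only [measure_empty, ENNReal.toReal_zero]
    positivity
  · have hK' : (0 : ℝ) < K := by exact_mod_cast hK
    set s := t / K with hs_def
    have hs : 0 ≤ s := by positivity
    have hXc : ∀ ω, |X ω - c| ≤ (K : ℝ) := by
      intro ω
      have h1 : X ω - c = ∫ ω', (X ω - X ω') ∂(Measure.pi μ) := by
        rw [integral_sub (integrable_const _) hint, integral_const, probReal_univ]
        simp [hc]
      rw [h1]
      calc |∫ ω', (X ω - X ω') ∂(Measure.pi μ)| ≤ ∫ ω', |X ω - X ω'| ∂(Measure.pi μ) := by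
            simpa [Real.norm_eq_abs] using
              norm_integral_le_integral_norm (μ := Measure.pi μ) (fun ω' => X ω - X ω')
        _ ≤ ∫ _ω', ((K : ℕ) : ℝ) ∂(Measure.pi μ) :=
            integral_mono ((integrable_const _).sub hint).abs (integrable_const _)
              fun ω' => osc_le K Ω X hlip ω ω'
        _ = (K : ℝ) := by rw [integral_const, probReal_univ]; simp
    -- integrability of the exponential moments
    have hintexp1 : Integrable (fun ω => Real.exp (s * (X ω - c))) (Measure.pi μ) := by
      refine bdd_integrable _ (by fun_prop) (Real.exp (|s| * K)) fun ω => exp_abs_le ?_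
      calc |s * (X ω - c)| = |s| * |X ω - c| := abs_mul _ _
        _ ≤ |s| * K := by gcongr; exact hXc ω
    have hintexp2 : Integrable (fun ω => Real.exp (s * (c - X ω))) (Measure.pi μ) := by
      refine bdd_integrable _ (by fun_prop) (Real.exp (|s| * K)) fun ω => exp_abs_le ?_
      calc |s * (c - X ω)| = |s| * |X ω - c| := by rw [abs_mul, abs_sub_comm]
        _ ≤ |s| * K := by gcongr; exact hXc ω
    -- mgf bounds
    have hmgf1 : ∫ ω, Real.exp (s * (X ω - c)) ∂(Measure.pi μ) ≤ Real.exp (K * s ^ 2 / 2) :=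
      mgf_pi_le K Ω mΩ μ hμ X hXm hint hlip s
    have hmgf2 : ∫ ω, Real.exp (s * (c - X ω)) ∂(Measure.pi μ) ≤ Real.exp (K * s ^ 2 / 2) := by
      have hlip' : ∀ (ω ω' : ∀ i, Ω i) (j : Fin K),
          (∀ i, i ≠ j → ω i = ω' i) → |(-X) ω - (-X) ω'| ≤ 1 := by
        intro ω ω' j hj
        have := hlip ω' ω j fun i hi => (hj i hi).symm
        calc |(-X) ω - (-X) ω'| = |X ω' - X ω| := by
              have h2 : (-X) ω - (-X) ω' = -(X ω - X ω') := by
                simp only [Pi.neg_apply]; ring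
              rw [h2, abs_neg, abs_sub_comm]
          _ ≤ 1 := this
      have h := mgf_pi_le K Ω mΩ μ hμ (-X) (hXm.neg) hint.neg hlip' s
      have hcneg : ∫ ω', (-X) ω' ∂(Measure.pi μ) = -c := by
        rw [hc]
        exact integral_neg X
      rw [hcneg] at h
      have heq : (fun ω => Real.exp (s * ((-X) ω - -c)))
          = fun ω => Real.exp (s * (c - X ω)) := by
        funext ω
        simp only [Pi.neg_apply]
        congr 1
        ring
      rwa [heq] at h
    -- Chernoff on both tails
    have hch1 := ProbabilityTheory.measure_ge_le_exp_mul_mgf (μ := Measure.pi μ)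
      (X := fun ω => X ω - c) (t := s) t hs hintexp1
    have hch2 := ProbabilityTheory.measure_ge_le_exp_mul_mgf (μ := Measure.pi μ)
      (X := fun ω => c - X ω) (t := s) t hs hintexp2
    rw [ProbabilityTheory.mgf] at hch1 hch2
    have hE : Real.exp (-s * t) * Real.exp (K * s ^ 2 / 2) = Real.exp (-t ^ 2 / (2 * K)) := by
      rw [← Real.exp_add]
      congr 1
      rw [hs_def]
      field_simp
      ring
    have tail1 : ((Measure.pi μ) {ω | t ≤ X ω - c}).toReal ≤ Real.exp (-t ^ 2 / (2 * K)) := by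
      refine le_trans hch1 ?_
      rw [← hE]
      exact mul_le_mul_of_nonneg_left hmgf1 (Real.exp_nonneg _)
    have tail2 : ((Measure.pi μ) {ω | t ≤ c - X ω}).toReal ≤ Real.exp (-t ^ 2 / (2 * K)) := by
      refine le_trans hch2 ?_
      rw [← hE]
      exact mul_le_mul_of_nonneg_left hmgf2 (Real.exp_nonneg _)
    have hsub : {ω : ∀ i, Ω i | |X ω - c| ≥ t}
        ⊆ {ω | t ≤ X ω - c} ∪ {ω | t ≤ c - X ω} := by
      intro ω hω
      have hω' : t ≤ |X ω - c| := hω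
      rcases le_abs.1 hω' with h | h
      · exact Or.inl h
      · exact Or.inr (by simpa [neg_sub] using h)
    calc ((Measure.pi μ) {ω | |X ω - c| ≥ t}).toReal
        ≤ (((Measure.pi μ) {ω | t ≤ X ω - c}) + ((Measure.pi μ) {ω | t ≤ c - X ω})).toReal := by
          refine ENNReal.toReal_mono ?_ (le_trans (measure_mono hsub) (measure_union_le _ _))
          exact ENNReal.add_ne_top.2 ⟨measure_ne_top _ _, measure_ne_top _ _⟩
      _ = ((Measure.pi μ) {ω | t ≤ X ω - c}).toReal
            + ((Measure.pi μ) {ω | t ≤ c - X ω}).toReal :=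
          ENNReal.toReal_add (measure_ne_top _ _) (measure_ne_top _ _)
      _ ≤ Real.exp (-t ^ 2 / (2 * K)) + Real.exp (-t ^ 2 / (2 * K)) := add_le_add tail1 tail2
      _ = 2 * Real.exp (-t ^ 2 / (2 * K)) := by ring
end

section
/- Let H be a d-uniform hypergraph on V and α, β ⊆ V with β a component of H of size at most k. After deleting all edges of H that intersect α, the vertex set β splits into at most k components. Hence ∑_{γ: γ∩β≠∅, γ∩α=∅} |γ|·I_γ^α ≤ k², where I_γ^α indicates that γ is a component of H with edges meeting α removed. -/
/-- Two vertices are joined by a walk of edges of `H`. -/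
def Reach {V : Type*} (H : Finset (Finset V)) (u v : V) : Prop :=
  Relation.ReflTransGen (fun a b => ∃ e ∈ H, a ∈ e ∧ b ∈ e) u v

/-- The subhypergraph induced on `α` (edges entirely inside `α`) is connected. -/
def InducedConnected {V : Type*} [DecidableEq V] (H : Finset (Finset V)) (α : Finset V) : Prop :=
  ∀ u ∈ α, ∀ v ∈ α, Reach (H.filter (fun e => e ⊆ α)) u v

/-- `α` is a component of `H`. -/
def IsComponent {V : Type*} [DecidableEq V] (H : Finset (Finset V)) (α : Finset V) : Prop :=
  InducedConnected H α ∧ ∀ e ∈ H, (e ∩ α).Nonempty → e ⊆ α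

/-- `H` with all edges meeting `S` deleted. -/
def delEdges {V : Type*} [DecidableEq V] (H : Finset (Finset V)) (S : Finset V) :
    Finset (Finset V) :=
  H.filter (fun e => Disjoint e S)

open Classical in
/-- Real-valued indicator of a proposition. -/
noncomputable def ind (P : Prop) : ℝ := if P then 1 else 0

lemma reach_closed {V : Type*} [DecidableEq V] {K : Finset (Finset V)} {β : Finset V}
    (hcl : ∀ e ∈ K, (e ∩ β).Nonempty → e ⊆ β) {u v : V} (h : Reach K u v) (hu : u ∈ β) :
    v ∈ β := by
  induction h with
  | refl => exact hu
  | tail _ hstep ih =>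
    obtain ⟨e, he, ha, hb⟩ := hstep
    exact hcl e he ⟨_, Finset.mem_inter.2 ⟨ha, ih⟩⟩ hb

lemma comp_subset {V : Type*} [DecidableEq V] {K : Finset (Finset V)} {γ1 γ2 : Finset V}
    (h1 : IsComponent K γ1) (h2 : IsComponent K γ2) {v : V} (hv1 : v ∈ γ1) (hv2 : v ∈ γ2) :
    γ1 ⊆ γ2 := by
  intro w hw
  refine reach_closed (K := K.filter (fun e => e ⊆ γ1)) ?_ (h1.1 v hv1 w hw) hv2
  intro e he hne
  exact h2.2 e (Finset.mem_filter.1 he).1 hne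

lemma comp_eq {V : Type*} [DecidableEq V] {K : Finset (Finset V)} {γ1 γ2 : Finset V}
    (h1 : IsComponent K γ1) (h2 : IsComponent K γ2) (hnd : ¬ Disjoint γ1 γ2) : γ1 = γ2 := by
  obtain ⟨v, hv⟩ := Finset.not_disjoint_iff.1 hnd
  exact le_antisymm (comp_subset h1 h2 hv.1 hv.2) (comp_subset h2 h1 hv.2 hv.1)

open Classical in
/-- If `β` is a component of `H` of size at most `k`, then after deleting all
edges meeting `α` the set `β` splits into at most `k` components, and
`∑_{γ : γ∩β≠∅, γ∩α=∅} |γ|·I_γ^α ≤ k²`. -/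
theorem stmt_13 {n d : ℕ} (hd : 2 ≤ d) (H : Finset (Finset (Fin n)))
    (hH : ∀ e ∈ H, e.card = d) (α β : Finset (Fin n)) (k : ℕ)
    (hβ : IsComponent H β) (hβk : β.card ≤ k) :
    ((β.powerset.filter
        (fun γ => γ.Nonempty ∧ IsComponent (delEdges H α) γ)).card ≤ k) ∧
    (∑ γ ∈ (Finset.univ : Finset (Fin n)).powerset.filter
          (fun γ => (γ ∩ β).Nonempty ∧ Disjoint γ α),
        (γ.card : ℝ) * ind (IsComponent (delEdges H α) γ)) ≤ (k : ℝ) ^ 2 := by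
  set K := delEdges H α with hK
  set F := β.powerset.filter (fun γ => γ.Nonempty ∧ IsComponent K γ) with hF
  -- members of F are pairwise disjoint
  have hdisj : ∀ γ1 ∈ F, ∀ γ2 ∈ F, γ1 ≠ γ2 → Disjoint γ1 γ2 := by
    intro γ1 h1 γ2 h2 hne
    by_contra hnd
    exact hne (comp_eq (Finset.mem_filter.1 h1).2.2 (Finset.mem_filter.1 h2).2.2 hnd)
  have hsumF : ∑ γ ∈ F, γ.card ≤ k := by
    rw [← Finset.card_biUnion hdisj]
    refine le_trans (Finset.card_le_card ?_) hβk
    intro v hv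
    obtain ⟨γ, hγ, hvγ⟩ := Finset.mem_biUnion.1 hv
    exact Finset.mem_powerset.1 (Finset.mem_filter.1 hγ).1 hvγ
  have hcardF : F.card ≤ k := by
    refine le_trans ?_ hsumF
    calc F.card = ∑ _γ ∈ F, 1 := by simp
    _ ≤ ∑ γ ∈ F, γ.card := by
        refine Finset.sum_le_sum fun γ hγ => ?_
        exact Finset.card_pos.2 (Finset.mem_filter.1 hγ).2.1
  refine ⟨hcardF, ?_⟩
  -- components meeting β are contained in β
  have hsub : ∀ γ : Finset (Fin n), IsComponent K γ → (γ ∩ β).Nonempty → γ ⊆ β := by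
    intro γ hγ ⟨u, hu⟩
    rw [Finset.mem_inter] at hu
    intro w hw
    refine reach_closed (K := K.filter (fun e => e ⊆ γ)) ?_ (hγ.1 u hu.1 w hw) hu.2
    intro e he hne
    have heH : e ∈ H := Finset.mem_filter.1 ((Finset.mem_filter.1 he).1) |>.1
    exact hβ.2 e heH hne
  set S := (Finset.univ : Finset (Fin n)).powerset.filter
      (fun γ => (γ ∩ β).Nonempty ∧ Disjoint γ α) with hS
  have hsum_eq : ∑ γ ∈ S, (γ.card : ℝ) * ind (IsComponent K γ)
      = ∑ γ ∈ S.filter (fun γ => IsComponent K γ), (γ.card : ℝ) := by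
    conv_rhs => rw [Finset.sum_filter]
    refine Finset.sum_congr rfl fun γ _ => ?_
    by_cases h : IsComponent K γ <;> simp [ind, h]
  rw [hsum_eq]
  have hSsub : S.filter (fun γ => IsComponent K γ) ⊆ F := by
    intro γ hγ
    obtain ⟨hγS, hγc⟩ := Finset.mem_filter.1 hγ
    obtain ⟨-, hmeet, -⟩ := Finset.mem_filter.1 hγS
    refine Finset.mem_filter.2 ⟨Finset.mem_powerset.2 (hsub γ hγc hmeet), ?_, hγc⟩
    obtain ⟨u, hu⟩ := hmeet
    exact ⟨u, (Finset.mem_inter.1 hu).1⟩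
  calc ∑ γ ∈ S.filter (fun γ => IsComponent K γ), (γ.card : ℝ)
      ≤ ∑ γ ∈ F, (γ.card : ℝ) :=
        Finset.sum_le_sum_of_subset_of_nonneg hSsub (fun γ _ _ => by positivity)
    _ = ((∑ γ ∈ F, γ.card : ℕ) : ℝ) := by push_cast; ring
    _ ≤ (k : ℝ) := by exact_mod_cast hsumF
    _ ≤ (k : ℝ) ^ 2 := by exact_mod_cast Nat.le_self_pow two_ne_zero k
end
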